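/- arXiv:1812.02613 — 6 statements merged into one kernel-verified Lean document; each statement's English description precedes it below -/
import Mathlib

section
/- Let G be a graph with n vertices, m edges, signless Laplacian Q = D + A, and least signless Laplacian eigenvalue δₙ. Then 1 + 2m/(2m − n·δₙ) ≤ χ_v(G), where χ_v(G) is the vector chromatic number of G. -/
open Matrix Finset
open scoped Kronecker Classical

/-- Largest eigenvalue (spectral supremum) of a real matrix. -/
noncomputable def lamMax {n : ℕ} (M : Matrix (Fin n) (Fin n) ℝ) : ℝ := sSup (spectrum ℝ M)

/-- Smallest eigenvalue (spectral infimum) of a real matrix. -/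
noncomputable def lamMin {n : ℕ} (M : Matrix (Fin n) (Fin n) ℝ) : ℝ := sInf (spectrum ℝ M)

/-- Diagonal matrix of vertex degrees. -/
noncomputable def degMatrix {n : ℕ} (G : SimpleGraph (Fin n)) : Matrix (Fin n) (Fin n) ℝ :=
  Matrix.diagonal fun i => (G.degree i : ℝ)

/-- The vector chromatic number: the smallest real `k ≥ 2` such that there exist unit
vectors `u i` with `⟪u i, u j⟫ ≤ -1/(k-1)` for all edges `ij`. -/
noncomputable def vecChromNum {V : Type*} [Fintype V] (G : SimpleGraph V) : ℝ :=
  sInf {k : ℝ | 2 ≤ k ∧ ∃ u : V → EuclideanSpace ℝ V,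
    (∀ i, ‖u i‖ = 1) ∧ ∀ i j, G.Adj i j → (inner ℝ (u i) (u j) : ℝ) ≤ -(1/(k-1))}

lemma shift_psd {n : ℕ} {M : Matrix (Fin n) (Fin n) ℝ} (hM : M.IsHermitian) :
    (M - lamMin M • 1).PosSemidef := by
  have hspec : spectrum ℝ M = Set.range hM.eigenvalues :=
    hM.spectrum_real_eq_range_eigenvalues
  have hle : ∀ i, lamMin M ≤ hM.eigenvalues i := by
    intro i
    rw [lamMin, hspec]
    exact csInf_le (Set.Finite.bddBelow (Set.finite_range _)) (Set.mem_range_self i)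
  have hU := hM.spectral_theorem
  set U : Matrix (Fin n) (Fin n) ℝ := (hM.eigenvectorUnitary : Matrix (Fin n) (Fin n) ℝ)
  have hUU : U * Uᴴ = 1 := by
    have := (Matrix.mem_unitaryGroup_iff).mp hM.eigenvectorUnitary.2
    simpa [star_eq_conjTranspose] using this
  have key : M - lamMin M • 1 =
      U * diagonal (fun i => hM.eigenvalues i - lamMin M) * Uᴴ := by
    have h1 : (lamMin M • 1 : Matrix (Fin n) (Fin n) ℝ)
        = U * (lamMin M • (1 : Matrix (Fin n) (Fin n) ℝ)) * Uᴴ := by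
      rw [Matrix.mul_smul, Matrix.mul_one, Matrix.smul_mul, hUU]
    have h2 : diagonal (fun i => hM.eigenvalues i - lamMin M)
        = diagonal (RCLike.ofReal ∘ hM.eigenvalues) - lamMin M • (1 : Matrix (Fin n) (Fin n) ℝ) := by
      rw [Matrix.smul_one_eq_diagonal, ← diagonal_sub]
      rfl
    simp only [Unitary.conjStarAlgAut_apply, Unitary.coe_star, star_eq_conjTranspose] at hU
    rw [h2, Matrix.mul_sub, Matrix.sub_mul, ← h1, ← hU]
  rw [key]
  exact (Matrix.posSemidef_diagonal_iff.mpr fun i => sub_nonneg.mpr (hle i)).mul_mul_conjTranspose_same U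

lemma trace_psd_gram {n : ℕ} {M : Matrix (Fin n) (Fin n) ℝ} (hM : M.PosSemidef)
    (B : Matrix (Fin n) (Fin n) ℝ) : 0 ≤ trace (M * (Bᴴ * B)) := by
  have h : trace (M * (Bᴴ * B)) = trace (B * M * Bᴴ) := by
    rw [trace_mul_comm, Matrix.mul_assoc, trace_mul_comm]
  rw [h, trace]
  apply Finset.sum_nonneg
  intro i _
  have := hM.dotProduct_mulVec_nonneg (fun j => B i j)
  have heq : (B * M * Bᴴ) i i = dotProduct (star fun j => B i j) (M *ᵥ fun j => B i j) := by
    simp only [mul_apply, conjTranspose_apply, dotProduct, mulVec, star_apply, star_trivial]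
    simp only [Finset.sum_mul, Finset.mul_sum]
    rw [Finset.sum_comm]
    exact Finset.sum_congr rfl fun _ _ => Finset.sum_congr rfl fun _ _ => by ring
  rw [diag_apply, heq]
  exact this

lemma simplex_sum {n : ℕ} (c : ℝ) (i j : Fin n) :
    ∑ x : Fin n, ((if i = x then (1:ℝ) else 0) - c) * ((if j = x then 1 else 0) - c)
      = (if i = j then 1 else 0) - 2*c + n*c^2 := by
  have h : ∀ x : Fin n, ((if i = x then (1:ℝ) else 0) - c) * ((if j = x then 1 else 0) - c)
      = (if i = x then (if j = x then (1:ℝ) else 0) else 0)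
        - c * (if i = x then 1 else 0) - c * (if j = x then 1 else 0) + c^2 := by
    intro x
    by_cases h1 : i = x <;> by_cases h2 : j = x <;> simp [h1, h2] <;> ring
  rw [Finset.sum_congr rfl fun x _ => h x]
  simp only [Finset.sum_add_distrib, Finset.sum_sub_distrib, ← Finset.mul_sum,
    Finset.sum_ite_eq, Finset.mem_univ, if_true, Finset.sum_const, card_univ,
    Fintype.card_fin, nsmul_eq_mul]
  by_cases h : i = j <;> simp [h, Ne.symm] <;> ring

lemma S_nonempty {n : ℕ} (G : SimpleGraph (Fin n)) :
    {k : ℝ | 2 ≤ k ∧ ∃ u : Fin n → EuclideanSpace ℝ (Fin n),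
      (∀ i, ‖u i‖ = 1) ∧ ∀ i j, G.Adj i j → (inner ℝ (u i) (u j) : ℝ) ≤ -(1/(k-1))}.Nonempty := by
  rcases Nat.lt_or_ge n 2 with hn | hn
  · refine ⟨2, le_refl 2, ?_⟩
    rcases Nat.eq_zero_or_pos n with h0 | h1
    · subst h0
      exact ⟨fun i => i.elim0, fun i => i.elim0, fun i => i.elim0⟩
    · have hn1 : n = 1 := by omega
      subst hn1
      refine ⟨fun _ => EuclideanSpace.single 0 1, fun i => by simp, fun i j hij => ?_⟩
      exact absurd (Subsingleton.elim i j) (G.ne_of_adj hij)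
  · have hn0 : (0:ℝ) < n := by positivity
    have hn1 : (1:ℝ) ≤ (n:ℝ) - 1 := by
      have : (2:ℝ) ≤ n := by exact_mod_cast hn
      linarith
    have hpos : (0:ℝ) < (n:ℝ) - 1 := by linarith
    set r : ℝ := Real.sqrt ((n:ℝ) / ((n:ℝ) - 1)) with hr
    set u : Fin n → EuclideanSpace ℝ (Fin n) :=
      fun i => WithLp.toLp 2 (fun x => ((if i = x then (1:ℝ) else 0) - 1/n) * r) with hu
    have hinner : ∀ i j, (inner ℝ (u i) (u j) : ℝ)
        = ((n:ℝ)/((n:ℝ)-1)) * ((if i = j then 1 else 0) - 1/n) := by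
      intro i j
      have hr2 : r * r = (n:ℝ) / ((n:ℝ) - 1) :=
        Real.mul_self_sqrt (by positivity)
      calc (inner ℝ (u i) (u j) : ℝ)
          = ∑ x : Fin n, (((if i = x then (1:ℝ) else 0) - 1/n) * r)
            * (((if j = x then 1 else 0) - 1/n) * r) := by
            simp [hu, PiLp.inner_apply, RCLike.inner_apply]
            exact Finset.sum_congr rfl fun _ _ => by ring
        _ = (r*r) * ∑ x : Fin n, ((if i = x then (1:ℝ) else 0) - 1/n)
            * ((if j = x then 1 else 0) - 1/n) := by
            rw [Finset.mul_sum]; exact Finset.sum_congr rfl fun x _ => by ring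
        _ = ((n:ℝ)/((n:ℝ)-1)) * ((if i = j then 1 else 0) - 1/n) := by
            rw [hr2, simplex_sum]
            have hne : (n:ℝ) ≠ 0 := ne_of_gt hn0
            by_cases h : i = j <;> field_simp [h] <;> ring
    refine ⟨n, by exact_mod_cast hn, u, ?_, ?_⟩
    · intro i
      have h1 : (inner ℝ (u i) (u i) : ℝ) = 1 := by
        rw [hinner]
        simp only [if_true]
        field_simp
      have := real_inner_self_eq_norm_mul_norm (u i)
      rw [h1] at this
      have := mul_self_eq_one_iff.mp this.symm
      rcases this with h | h
      · exact h
      · nlinarith [norm_nonneg (u i)]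
    · intro i j hij
      have hne : (n:ℝ) ≠ 0 := ne_of_gt hn0
      have hkey : (n:ℝ)/((n:ℝ)-1) * ((0:ℝ) - 1/n) = -(1/((n:ℝ)-1)) := by
        field_simp; ring
      rw [hinner, if_neg (G.ne_of_adj hij), hkey]

lemma key_bound {n : ℕ} (G : SimpleGraph (Fin n)) (k : ℝ) (hk : 2 ≤ k)
    (u : Fin n → EuclideanSpace ℝ (Fin n)) (hnorm : ∀ i, ‖u i‖ = 1)
    (hadj : ∀ i j, G.Adj i j → (inner ℝ (u i) (u j) : ℝ) ≤ -(1/(k-1))) :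
    1 + (2 * (G.edgeFinset.card : ℝ)) /
        (2 * (G.edgeFinset.card : ℝ) - (n : ℝ) * lamMin (degMatrix G + G.adjMatrix ℝ)) ≤ k := by
  set m : ℕ := G.edgeFinset.card with hm
  rcases Nat.eq_zero_or_pos m with hm0 | hmpos
  · rw [hm0]
    simp
    linarith
  -- m > 0, so there is an edge and n > 0
  have hn : 0 < n := by
    obtain ⟨e, he⟩ := Finset.card_pos.mp hmpos
    induction e with
    | h i j => exact i.pos
  have hk1 : (1:ℝ) ≤ k - 1 := by linarith
  have hk1pos : (0:ℝ) < k - 1 := by linarith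
  set t : ℝ := 1/(k-1) with ht
  have htpos : 0 < t := by positivity
  set Q : Matrix (Fin n) (Fin n) ℝ := degMatrix G + G.adjMatrix ℝ with hQdef
  have hQ : Q.IsHermitian := by
    apply Matrix.IsHermitian.add
    · exact Matrix.isHermitian_diagonal _
    · show (G.adjMatrix ℝ)ᴴ = G.adjMatrix ℝ
      ext i j
      simp [Matrix.conjTranspose_apply, SimpleGraph.adjMatrix_apply, SimpleGraph.adj_comm]
  set δ : ℝ := lamMin Q with hδ
  set B : Matrix (Fin n) (Fin n) ℝ := fun x i => u i x with hB
  set W : Matrix (Fin n) (Fin n) ℝ := Bᴴ * B with hW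
  have hWij : ∀ i j, W i j = (inner ℝ (u i) (u j) : ℝ) := by
    intro i j
    simp [hW, hB, Matrix.mul_apply, Matrix.conjTranspose_apply, PiLp.inner_apply,
      RCLike.inner_apply]
    show ∑ x, Bᴴ i x * B x j = _
    exact Finset.sum_congr rfl fun x _ => by rw [mul_comm]; rfl
  have hWdiag : ∀ i, W i i = 1 := by
    intro i
    rw [hWij]
    have := real_inner_self_eq_norm_mul_norm (u i)
    rw [hnorm i] at this
    simpa using this
  have htr : 0 ≤ trace ((Q - δ • 1) * W) := trace_psd_gram (shift_psd hQ) B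
  have htr1 : trace ((Q - δ • 1) * W) = trace (Q * W) - δ * (n:ℝ) := by
    rw [Matrix.sub_mul, trace_sub, Matrix.smul_mul, trace_smul]
    congr 1
    rw [Matrix.one_mul, smul_eq_mul]
    congr 1
    rw [trace]
    simp only [diag_apply]
    rw [Finset.sum_congr rfl fun i _ => hWdiag i]
    simp
  have hdeg : trace (degMatrix G * W) = 2 * (m:ℝ) := by
    rw [trace]
    have : ∀ i, (degMatrix G * W).diag i = (G.degree i : ℝ) := by
      intro i
      simp [Matrix.diag_apply, degMatrix, Matrix.diagonal_mul, hWdiag i]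
    rw [Finset.sum_congr rfl fun i _ => this i]
    rw [← Nat.cast_sum]
    rw [SimpleGraph.sum_degrees_eq_twice_card_edges]
    push_cast
    ring
  have hadjsum : ∑ i, ∑ j, G.adjMatrix ℝ i j = 2 * (m:ℝ) := by
    have hrow : ∀ i, ∑ j, G.adjMatrix ℝ i j = (G.degree i : ℝ) := by
      intro i
      simp [SimpleGraph.adjMatrix_apply, Finset.sum_boole, SimpleGraph.degree,
        SimpleGraph.neighborFinset_eq_filter]
    rw [Finset.sum_congr rfl fun i _ => hrow i, ← Nat.cast_sum,
      SimpleGraph.sum_degrees_eq_twice_card_edges]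
    push_cast
    ring
  have hAW : trace (G.adjMatrix ℝ * W) ≤ -t * (2 * (m:ℝ)) := by
    have h1 : trace (G.adjMatrix ℝ * W) = ∑ i, ∑ j, G.adjMatrix ℝ i j * W j i := by
      simp [trace, Matrix.diag_apply, Matrix.mul_apply]
    rw [h1]
    have h2 : ∀ i j, G.adjMatrix ℝ i j * W j i ≤ G.adjMatrix ℝ i j * (-t) := by
      intro i j
      by_cases hadj' : G.Adj i j
      · simp only [SimpleGraph.adjMatrix_apply, hadj', if_true, one_mul]
        rw [hWij]
        exact hadj j i hadj'.symm
      · simp [SimpleGraph.adjMatrix_apply, hadj']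
    calc ∑ i, ∑ j, G.adjMatrix ℝ i j * W j i
        ≤ ∑ i, ∑ j, G.adjMatrix ℝ i j * (-t) :=
          Finset.sum_le_sum fun i _ => Finset.sum_le_sum fun j _ => h2 i j
      _ = -t * (2 * (m:ℝ)) := by
          simp only [← Finset.sum_mul]
          rw [hadjsum]
          ring
  have hQW : trace (Q * W) ≤ 2 * (m:ℝ) + -t * (2 * (m:ℝ)) := by
    rw [hQdef, Matrix.add_mul, trace_add, hdeg]
    linarith [hAW]
  -- (★): n δ ≤ 2m − 2mt
  have hstar : (n:ℝ) * δ ≤ 2 * (m:ℝ) - t * (2 * (m:ℝ)) := by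
    rw [htr1] at htr
    nlinarith [hQW]
  -- final algebra
  have hmpos' : (0:ℝ) < 2 * (m:ℝ) := by positivity
  have hd : t * (2 * (m:ℝ)) ≤ 2 * (m:ℝ) - (n:ℝ) * δ := by linarith
  have hdpos : (0:ℝ) < 2 * (m:ℝ) - (n:ℝ) * δ := by nlinarith
  have hcancel : (k - 1) * t = 1 := by
    rw [ht]; field_simp
  have hfin : 2 * (m:ℝ) ≤ (k - 1) * (2 * (m:ℝ) - (n:ℝ) * δ) := by
    calc 2 * (m:ℝ) = (k-1) * (t * (2 * (m:ℝ))) := by rw [← mul_assoc, hcancel, one_mul]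
      _ ≤ (k-1) * (2 * (m:ℝ) - (n:ℝ) * δ) := by
          apply mul_le_mul_of_nonneg_left hd (by linarith)
  have : 2 * (m:ℝ) / (2 * (m:ℝ) - (n:ℝ) * δ) ≤ k - 1 := by
    rw [div_le_iff₀ hdpos]
    linarith
  linarith

/-- Lima et al. bound for the vector chromatic number:
`1 + 2m/(2m - n * deltaN) <= chi_v(G)`, where `deltaN` is the least eigenvalue of the
signless Laplacian `Q = D + A`. -/
theorem lima_bound_vector_chromatic_number {n : ℕ} (G : SimpleGraph (Fin n)) :
    1 + (2 * (G.edgeFinset.card : ℝ)) /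
        (2 * (G.edgeFinset.card : ℝ) - (n : ℝ) * lamMin (degMatrix G + G.adjMatrix ℝ)) ≤
      vecChromNum G := by
  rw [vecChromNum]
  apply le_csInf (S_nonempty G)
  rintro k ⟨hk, u, hnorm, hadj⟩
  exact key_bound G k hk u hnorm hadj
end

section
/- Let G be a connected graph with adjacency matrix eigenvalues μ₁ ≥ ... ≥ μₙ, largest Laplacian eigenvalue λ₁, and largest signless Laplacian eigenvalue δ₁. Then 1 + μ₁/(μ₁ − δ₁ + λ₁) ≤ χ_v(G). -/
open Matrix Finset
open scoped Kronecker Classical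

section Helpers

variable {n : ℕ}

private lemma inner_eq_sum' (u v : EuclideanSpace ℝ (Fin n)) :
    (inner ℝ u v : ℝ) = ∑ c, u c * v c := by
  simp [PiLp.inner_apply, RCLike.inner_apply, conj_trivial, mul_comm]

private lemma quadform_eq_sum' (S : Matrix (Fin n) (Fin n) ℝ) (z : Fin n → ℝ) :
    z ⬝ᵥ (S *ᵥ z) = ∑ i, ∑ j, S i j * (z i * z j) := by
  simp only [dotProduct, mulVec, Finset.mul_sum]
  exact Finset.sum_congr rfl fun i _ => Finset.sum_congr rfl fun j _ => by ring

private lemma lamMax_isGreatest' (hn : 0 < n) {S : Matrix (Fin n) (Fin n) ℝ}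
    (hS : S.IsHermitian) : IsGreatest (spectrum ℝ S) (lamMax S) := by
  obtain ⟨i₀, -, hmax⟩ := Finset.exists_max_image Finset.univ hS.eigenvalues
    ⟨⟨0, hn⟩, Finset.mem_univ _⟩
  have hgr : IsGreatest (spectrum ℝ S) (hS.eigenvalues i₀) := by
    constructor
    · exact hS.eigenvalues_mem_spectrum_real i₀
    · rintro x hx
      rw [hS.spectrum_real_eq_range_eigenvalues] at hx
      obtain ⟨i, rfl⟩ := hx
      exact hmax i (Finset.mem_univ i)
  rwa [show lamMax S = hS.eigenvalues i₀ from hgr.csSup_eq]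

private lemma eigenvalues_le_lamMax' (hn : 0 < n) {S : Matrix (Fin n) (Fin n) ℝ}
    (hS : S.IsHermitian) (i : Fin n) : hS.eigenvalues i ≤ lamMax S :=
  (lamMax_isGreatest' hn hS).2 (hS.eigenvalues_mem_spectrum_real i)

private lemma exists_top_eigvec' (hn : 0 < n) {S : Matrix (Fin n) (Fin n) ℝ}
    (hS : S.IsHermitian) :
    ∃ v : Fin n → ℝ, v ⬝ᵥ v = 1 ∧ S *ᵥ v = lamMax S • v := by
  have hmem := (lamMax_isGreatest' hn hS).1
  rw [hS.spectrum_real_eq_range_eigenvalues] at hmem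
  obtain ⟨i₀, hi₀⟩ := hmem
  refine ⟨⇑(hS.eigenvectorBasis i₀), ?_, by rw [hS.mulVec_eigenvectorBasis, hi₀]⟩
  have hnorm := hS.eigenvectorBasis.orthonormal.1 i₀
  have h1 : (inner ℝ (hS.eigenvectorBasis i₀) (hS.eigenvectorBasis i₀) : ℝ) = 1 := by
    rw [real_inner_self_eq_norm_sq, hnorm]; norm_num
  rw [inner_eq_sum'] at h1; exact h1

private lemma rayleigh_le' (hn : 0 < n) {S : Matrix (Fin n) (Fin n) ℝ} (hS : S.IsHermitian)
    (x : Fin n → ℝ) : x ⬝ᵥ (S *ᵥ x) ≤ lamMax S * (x ⬝ᵥ x) := by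
  set U : Matrix (Fin n) (Fin n) ℝ := (hS.eigenvectorUnitary : Matrix (Fin n) (Fin n) ℝ)
    with hUdef
  have hstar : star U = Uᵀ := by
    rw [Matrix.star_eq_conjTranspose, Matrix.conjTranspose_eq_transpose_of_trivial]
  have hUU : U * Uᵀ = 1 := by
    have := (Matrix.mem_unitaryGroup_iff).mp hS.eigenvectorUnitary.2
    rwa [hstar] at this
  set y : Fin n → ℝ := Uᵀ *ᵥ x with hy
  have hdiag : S = U * Matrix.diagonal hS.eigenvalues * Uᵀ := by
    have := hS.spectral_theorem
    rw [Unitary.conjStarAlgAut_apply, hstar] at this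
    exact this
  have h1 : x ⬝ᵥ (S *ᵥ x) = ∑ i, hS.eigenvalues i * (y i)^2 := by
    conv_lhs => rw [hdiag]
    rw [← Matrix.mulVec_mulVec, ← Matrix.mulVec_mulVec, Matrix.dotProduct_mulVec x U,
      ← Matrix.transpose_transpose U, Matrix.vecMul_transpose, Matrix.transpose_transpose]
    simp only [← hy, dotProduct, Matrix.mulVec_diagonal]
    exact Finset.sum_congr rfl fun i _ => by ring
  have h2 : x ⬝ᵥ x = ∑ i, (y i)^2 := by
    have h3 : y ⬝ᵥ y = x ⬝ᵥ x := by
      rw [hy, Matrix.dotProduct_mulVec, Matrix.vecMul_transpose, Matrix.mulVec_mulVec, hUU,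
        Matrix.one_mulVec]
    rw [← h3]
    simp [dotProduct, pow_two]
  rw [h1, h2, Finset.mul_sum]
  exact Finset.sum_le_sum fun i _ => by
    have h := eigenvalues_le_lamMax' hn hS i
    nlinarith [sq_nonneg (y i)]

private lemma sum_psd_gram_nonneg' {S : Matrix (Fin n) (Fin n) ℝ}
    (hpsd : ∀ x : Fin n → ℝ, 0 ≤ x ⬝ᵥ (S *ᵥ x))
    (u : Fin n → EuclideanSpace ℝ (Fin n)) (z : Fin n → ℝ) :
    0 ≤ ∑ i, ∑ j, S i j * (z i * z j * (inner ℝ (u i) (u j) : ℝ)) := by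
  have key : ∑ i, ∑ j, S i j * (z i * z j * (inner ℝ (u i) (u j) : ℝ))
      = ∑ c, (fun i => z i * u i c) ⬝ᵥ (S *ᵥ (fun i => z i * u i c)) := by
    simp only [quadform_eq_sum', inner_eq_sum']
    conv_rhs => rw [Finset.sum_comm]
    refine Finset.sum_congr rfl fun i _ => ?_
    conv_rhs => rw [Finset.sum_comm]
    refine Finset.sum_congr rfl fun j _ => ?_
    simp only [Finset.mul_sum]
    exact Finset.sum_congr rfl fun c _ => by ring
  rw [key]
  exact Finset.sum_nonneg fun c _ => hpsd _

private lemma chrom_set_nonempty' (hn : 0 < n) (G : SimpleGraph (Fin n)) :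
    {k : ℝ | 2 ≤ k ∧ ∃ u : Fin n → EuclideanSpace ℝ (Fin n),
      (∀ i, ‖u i‖ = 1) ∧
        ∀ i j, G.Adj i j → (inner ℝ (u i) (u j) : ℝ) ≤ -(1/(k-1))}.Nonempty := by
  rcases lt_or_ge n 2 with h2 | h2
  · -- n = 1
    have hn1 : n = 1 := by omega
    subst hn1
    refine ⟨2, le_refl 2, fun i => EuclideanSpace.single i 1, fun i => ?_, fun i j hadj => ?_⟩
    · simp
    · exact absurd (Subsingleton.elim i j) (G.ne_of_adj hadj)
  · -- n ≥ 2 : simplex construction with k = n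
    have hN2 : (2 : ℝ) ≤ (n : ℝ) := by exact_mod_cast h2
    have hN0 : (n : ℝ) ≠ 0 := by positivity
    have hN1 : (0 : ℝ) < (n : ℝ) - 1 := by linarith
    have hN1' : (n : ℝ) - 1 ≠ 0 := ne_of_gt hN1
    set c : ℝ := Real.sqrt ((n : ℝ) / ((n : ℝ) - 1)) with hc
    have hc2 : c * c = (n : ℝ) / ((n : ℝ) - 1) := Real.mul_self_sqrt (by positivity)
    set u : Fin n → EuclideanSpace ℝ (Fin n) := fun i =>
      (WithLp.equiv 2 (Fin n → ℝ)).symm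
        (fun m => c * ((if i = m then 1 else 0) - 1 / (n : ℝ))) with hu
    have happ : ∀ i m, u i m = c * ((if i = m then 1 else 0) - 1 / (n : ℝ)) := by
      intro i m; rfl
    have hinner : ∀ i j, (inner ℝ (u i) (u j) : ℝ)
        = (c * c) * ((if i = j then 1 else 0) - 1 / (n : ℝ)) := by
      intro i j
      rw [inner_eq_sum']
      have expand : ∀ m, u i m * u j m =
          c * c * ((if i = m then (1:ℝ) else 0) * (if j = m then 1 else 0))
            - c * c / (n : ℝ) * (if i = m then 1 else 0)
            - c * c / (n : ℝ) * (if j = m then 1 else 0)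
            + c * c / ((n : ℝ) * (n : ℝ)) := by
        intro m
        rw [happ, happ]
        ring
      rw [Finset.sum_congr rfl (fun m _ => expand m)]
      simp only [Finset.sum_add_distrib, Finset.sum_sub_distrib, ← Finset.mul_sum,
        Finset.sum_const, Finset.card_univ, Fintype.card_fin, nsmul_eq_mul]
      have hsum1 : ∑ m, (if i = m then (1:ℝ) else 0) * (if j = m then 1 else 0)
          = if i = j then 1 else 0 := by
        simp [ite_and, Finset.sum_ite_eq]
      have hsum2 : ∑ m : Fin n, (if i = m then (1:ℝ) else 0) = 1 := by
        simp [Finset.sum_ite_eq]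
      have hsum3 : ∑ m : Fin n, (if j = m then (1:ℝ) else 0) = 1 := by
        simp [Finset.sum_ite_eq]
      rw [hsum1, hsum2, hsum3]
      split_ifs with h <;> field_simp <;> ring
    have hnorm : ∀ i, ‖u i‖ = 1 := by
      intro i
      have h1 : (inner ℝ (u i) (u i) : ℝ) = 1 := by
        rw [hinner i i]
        rw [if_pos rfl]
        rw [hc2]
        field_simp
      have h2 := real_inner_self_eq_norm_mul_norm (u i)
      nlinarith [norm_nonneg (u i)]
    refine ⟨(n : ℝ), hN2, u, hnorm, fun i j hadj => ?_⟩
    have hij : i ≠ j := G.ne_of_adj hadj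
    rw [hinner i j, if_neg hij, hc2]
    have heq : (n : ℝ) / ((n : ℝ) - 1) * (0 - 1 / (n : ℝ)) = -(1 / ((n : ℝ) - 1)) := by
      field_simp
      ring
    rw [heq]

end Helpers

/-- Kolotilina bound for the vector chromatic number of a connected graph:
`1 + mu1/(mu1 - delta1 + lambda1) <= chi_v(G)`. -/
theorem kolotilina_bound_vector_chromatic_number {n : ℕ} (G : SimpleGraph (Fin n))
    (hconn : G.Connected) :
    1 + lamMax (G.adjMatrix ℝ) /
        (lamMax (G.adjMatrix ℝ) - lamMax (degMatrix G + G.adjMatrix ℝ) +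
          lamMax (degMatrix G - G.adjMatrix ℝ)) ≤
      vecChromNum G := by
  have hne : Nonempty (Fin n) := hconn.nonempty
  have hn : 0 < n := Fin.pos (Classical.arbitrary (Fin n))
  set A : Matrix (Fin n) (Fin n) ℝ := G.adjMatrix ℝ with hA
  set Dg : Matrix (Fin n) (Fin n) ℝ := degMatrix G with hDg
  -- Hermitian facts
  have hAherm : A.IsHermitian := by
    rw [Matrix.IsHermitian, Matrix.conjTranspose_eq_transpose_of_trivial]
    exact G.isSymm_adjMatrix
  have hDgherm : Dg.IsHermitian := by
    rw [hDg, degMatrix]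
    exact Matrix.isHermitian_diagonal _
  have hQherm : (Dg + A).IsHermitian := hDgherm.add hAherm
  have hLherm : (Dg - A).IsHermitian := hDgherm.sub hAherm
  set μ : ℝ := lamMax A with hμ
  set δ : ℝ := lamMax (Dg + A) with hδ
  set lam : ℝ := lamMax (Dg - A) with hlam
  -- μ ≥ 0
  have hμ0 : 0 ≤ μ := by
    have h := rayleigh_le' hn hAherm (Pi.single (Classical.arbitrary (Fin n)) 1)
    set i₀ := Classical.arbitrary (Fin n)
    have hdot : (Pi.single i₀ (1:ℝ)) ⬝ᵥ (Pi.single i₀ 1) = 1 := by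
      simp [dotProduct, Pi.single_apply]
    have hquad : (Pi.single i₀ (1:ℝ)) ⬝ᵥ (A *ᵥ Pi.single i₀ 1) = 0 := by
      rw [quadform_eq_sum']
      refine Finset.sum_eq_zero fun a _ => Finset.sum_eq_zero fun b _ => ?_
      by_cases hai : a = i₀
      · by_cases hbi : b = i₀
        · subst hai; subst hbi; simp [hA, SimpleGraph.irrefl]
        · simp [Pi.single_apply, hbi]
      · simp [Pi.single_apply, hai]
    rw [hdot, hquad, mul_one] at h
    exact h
  -- top eigenvector of Q and its entrywise absolute value z
  obtain ⟨v, hv1, hveig⟩ := exists_top_eigvec' hn hQherm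
  set z : Fin n → ℝ := fun i => |v i| with hz
  have hz1 : z ⬝ᵥ z = 1 := by
    rw [← hv1]
    simp [dotProduct, hz, abs_mul_abs_self]
  have hznn : ∀ i, 0 ≤ z i := fun i => abs_nonneg _
  -- entries of Q are nonnegative
  have hQnn : ∀ i j, 0 ≤ (Dg + A) i j := by
    intro i j
    rw [Matrix.add_apply, hDg, degMatrix, Matrix.diagonal_apply, hA, SimpleGraph.adjMatrix_apply]
    split_ifs <;> positivity
  -- z realizes δ on Q
  have hvQ : v ⬝ᵥ ((Dg + A) *ᵥ v) = δ := by
    rw [hveig, dotProduct_smul, smul_eq_mul, hv1, mul_one]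
  have hzQle : z ⬝ᵥ ((Dg + A) *ᵥ z) ≤ δ := by
    have h := rayleigh_le' hn hQherm z
    rwa [hz1, mul_one] at h
  have hzQge : δ ≤ z ⬝ᵥ ((Dg + A) *ᵥ z) := by
    rw [← hvQ, quadform_eq_sum', quadform_eq_sum']
    refine Finset.sum_le_sum fun i _ => Finset.sum_le_sum fun j _ => ?_
    refine mul_le_mul_of_nonneg_left ?_ (hQnn i j)
    calc v i * v j ≤ |v i * v j| := le_abs_self _
    _ = z i * z j := by rw [hz]; exact abs_mul _ _
  have hzQ : z ⬝ᵥ ((Dg + A) *ᵥ z) = δ := le_antisymm hzQle hzQge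
  -- p and q
  set p : ℝ := z ⬝ᵥ (Dg *ᵥ z) with hp
  set q : ℝ := z ⬝ᵥ (A *ᵥ z) with hq
  have hpq : p + q = δ := by
    rw [hp, hq, ← dotProduct_add, ← Matrix.add_mulVec, hzQ]
  have hqμ : q ≤ μ := by
    have h := rayleigh_le' hn hAherm z
    rwa [hz1, mul_one] at h
  -- now bound over all admissible k
  refine le_csInf (chrom_set_nonempty' hn G) ?_
  rintro k ⟨hk2, u, hunit, hedge⟩
  set t : ℝ := 1 / (k - 1) with ht
  have hk1 : (1:ℝ) ≤ k - 1 := by linarith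
  have ht0 : 0 < t := by rw [ht]; positivity
  have ht1 : t ≤ 1 := by rw [ht]; rw [div_le_one (by linarith)]; linarith
  -- the PSD matrix lam • 1 - (Dg - A)
  have hpsd : ∀ x : Fin n → ℝ, 0 ≤ x ⬝ᵥ ((lam • (1 : Matrix (Fin n) (Fin n) ℝ) - (Dg - A)) *ᵥ x) := by
    intro x
    rw [Matrix.sub_mulVec, dotProduct_sub, Matrix.smul_mulVec, Matrix.one_mulVec,
      dotProduct_smul, smul_eq_mul]
    have h := rayleigh_le' hn hLherm x
    linarith
  have hgram := sum_psd_gram_nonneg' hpsd u z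
  -- expand the gram sum
  have hMii : ∀ i, (inner ℝ (u i) (u i) : ℝ) = 1 := by
    intro i
    rw [real_inner_self_eq_norm_mul_norm, hunit i, mul_one]
  have hzsq : ∑ i, z i * z i = 1 := by
    rw [← hz1]; rfl
  have hT1 : ∑ i, ∑ j, (if i = j then lam else 0) * (z i * z j * (inner ℝ (u i) (u j) : ℝ))
      = lam := by
    simp only [ite_mul, zero_mul, Finset.sum_ite_eq, Finset.mem_univ, if_true, hMii, mul_one]
    rw [← Finset.mul_sum, hzsq, mul_one]
  have hT2 : ∑ i, ∑ j, (if i = j then (G.degree i : ℝ) else 0)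
        * (z i * z j * (inner ℝ (u i) (u j) : ℝ)) = p := by
    simp only [ite_mul, zero_mul, Finset.sum_ite_eq, Finset.mem_univ, if_true, hMii, mul_one]
    rw [hp, hDg, degMatrix]
    simp only [dotProduct, Matrix.mulVec_diagonal]
    exact Finset.sum_congr rfl fun i _ => by ring
  have hSsum : ∑ i, ∑ j, (lam • (1 : Matrix (Fin n) (Fin n) ℝ) - (Dg - A)) i j
        * (z i * z j * (inner ℝ (u i) (u j) : ℝ))
      = lam - p + ∑ i, ∑ j, A i j * (z i * z j * (inner ℝ (u i) (u j) : ℝ)) := by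
    have hentry : ∀ i j, (lam • (1 : Matrix (Fin n) (Fin n) ℝ) - (Dg - A)) i j
        = (if i = j then lam else 0) - (if i = j then (G.degree i : ℝ) else 0) + A i j := by
      intro i j
      rw [Matrix.sub_apply, Matrix.smul_apply, Matrix.sub_apply, Matrix.one_apply, hDg, degMatrix,
        Matrix.diagonal_apply, smul_eq_mul]
      split_ifs <;> ring
    have hterm : ∀ i j, (lam • (1 : Matrix (Fin n) (Fin n) ℝ) - (Dg - A)) i j
          * (z i * z j * (inner ℝ (u i) (u j) : ℝ))
        = (if i = j then lam else 0) * (z i * z j * (inner ℝ (u i) (u j) : ℝ))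
          - (if i = j then (G.degree i : ℝ) else 0) * (z i * z j * (inner ℝ (u i) (u j) : ℝ))
          + A i j * (z i * z j * (inner ℝ (u i) (u j) : ℝ)) := by
      intro i j
      rw [hentry i j]
      ring
    rw [Finset.sum_congr rfl fun i _ => Finset.sum_congr rfl fun j _ => hterm i j]
    simp only [Finset.sum_add_distrib, Finset.sum_sub_distrib]
    rw [hT1, hT2]
  have hT3 : ∑ i, ∑ j, A i j * (z i * z j * (inner ℝ (u i) (u j) : ℝ)) ≤ -(t * q) := by
    have hqsum : q = ∑ i, ∑ j, A i j * (z i * z j) := by rw [hq, quadform_eq_sum']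
    have hstep : ∑ i, ∑ j, A i j * (z i * z j * (inner ℝ (u i) (u j) : ℝ))
        ≤ ∑ i, ∑ j, A i j * (z i * z j) * (-t) := by
      refine Finset.sum_le_sum fun i _ => Finset.sum_le_sum fun j _ => ?_
      by_cases hadj : G.Adj i j
      · have hAij : A i j = 1 := by simp [hA, hadj]
        rw [hAij, one_mul, one_mul]
        have hzz : 0 ≤ z i * z j := mul_nonneg (hznn i) (hznn j)
        have := hedge i j hadj
        calc z i * z j * (inner ℝ (u i) (u j) : ℝ) ≤ z i * z j * (-(1/(k-1))) :=
              mul_le_mul_of_nonneg_left this hzz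
          _ = z i * z j * (-t) := by rw [ht]
      · have hAij : A i j = 0 := by simp [hA, hadj]
        rw [hAij, zero_mul, zero_mul, zero_mul]
    refine hstep.trans (le_of_eq ?_)
    rw [hqsum, Finset.mul_sum, ← Finset.sum_neg_distrib]
    refine Finset.sum_congr rfl fun i _ => ?_
    rw [Finset.mul_sum, ← Finset.sum_neg_distrib]
    exact Finset.sum_congr rfl fun j _ => by ring
  have hkey : p + t * q ≤ lam := by
    rw [hSsum] at hgram
    linarith
  -- δ ≤ lam + (1 - t) * μ and conclude t * μ ≤ μ - δ + lam
  have hδle : δ ≤ lam + (1 - t) * μ := by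
    have h1t : 0 ≤ 1 - t := by linarith
    have := mul_le_mul_of_nonneg_left hqμ h1t
    linarith
  have htμ : t * μ ≤ μ - δ + lam := by linarith
  -- final arithmetic
  rcases lt_or_ge 0 (μ - δ + lam) with hd | hd
  · have hkt : (k - 1) * t = 1 := by
      rw [ht]; field_simp
    have hμk : μ ≤ (k - 1) * (μ - δ + lam) := by
      have h := mul_le_mul_of_nonneg_left htμ (by linarith : (0:ℝ) ≤ k - 1)
      calc μ = (k - 1) * t * μ := by rw [hkt, one_mul]
        _ = (k - 1) * (t * μ) := by ring
        _ ≤ (k - 1) * (μ - δ + lam) := h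
    have hdiv : μ / (μ - δ + lam) ≤ k - 1 := by
      rw [div_le_iff₀ hd]
      linarith
    linarith
  · have hμz : μ = 0 := by nlinarith
    rw [hμz, zero_div]
    linarith
end

section
/- Let Φ ∈ ℂ^{n×n} be a correlation matrix (Hermitian positive semidefinite with all diagonal entries equal to 1) and X ∈ ℂ^{n×n} be Hermitian. Then X majorizes the Schur (entrywise) product Φ ∘ X; i.e., writing the eigenvalues of X as α₁ ≥ ... ≥ αₙ and of Φ ∘ X as β₁ ≥ ... ≥ βₙ, we have Σ_{i≤ℓ} α_i ≥ Σ_{i≤ℓ} β_i for all ℓ < n, and Σ_i α_i = Σ_i β_i. -/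
open Matrix Finset
open scoped Kronecker Classical ComplexOrder

private lemma psd_sum' {n m : ℕ} (f : Fin m → Matrix (Fin n) (Fin n) ℂ)
    (h : ∀ k, (f k).PosSemidef) : (∑ k, f k).PosSemidef :=
  Finset.sum_induction f _ (fun _ _ ha hb => ha.add hb) Matrix.PosSemidef.zero (fun k _ => h k)

private lemma psd_diag' {n : ℕ} {M : Matrix (Fin n) (Fin n) ℂ} (hM : M.PosSemidef) (i : Fin n) :
    0 ≤ M i i := by
  exact hM.diag_nonneg

private lemma card_filter_lt' {n ℓ : ℕ} (hℓ : ℓ ≤ n) :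
    (Finset.univ.filter (fun i : Fin n => (i : ℕ) < ℓ)).card = ℓ := by
  have himg : (Finset.univ.filter (fun i : Fin n => (i : ℕ) < ℓ)).image Fin.val
      = Finset.range ℓ := by
    ext a
    simp only [Finset.mem_image, Finset.mem_filter, Finset.mem_univ, true_and, Finset.mem_range]
    constructor
    · rintro ⟨i, hi, rfl⟩; exact hi
    · intro ha; exact ⟨⟨a, lt_of_lt_of_le ha hℓ⟩, ha, rfl⟩
  rw [← Finset.card_image_of_injective _ Fin.val_injective, himg, Finset.card_range]

private lemma weight_sum_le' {n ℓ : ℕ} (hℓ : ℓ < n) (t a : Fin n → ℝ) (ha : Antitone a)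
    (h0 : ∀ i, 0 ≤ t i) (h1 : ∀ i, t i ≤ 1) (hsum : ∑ i, t i = (ℓ : ℝ)) :
    ∑ i, t i * a i ≤ ∑ i ∈ Finset.univ.filter (fun i : Fin n => (i : ℕ) < ℓ), a i := by
  set m := a ⟨ℓ, hℓ⟩ with hm
  have hcard := card_filter_lt' (n := n) hℓ.le
  have hsplit := Finset.sum_filter_add_sum_filter_not Finset.univ
    (fun i : Fin n => (i : ℕ) < ℓ) (fun i => t i * a i)
  have hsplit2 := Finset.sum_filter_add_sum_filter_not Finset.univ
    (fun i : Fin n => (i : ℕ) < ℓ) t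
  have hb1 : ∑ i ∈ Finset.univ.filter (fun i : Fin n => (i : ℕ) < ℓ), t i * a i ≤
      ∑ i ∈ Finset.univ.filter (fun i : Fin n => (i : ℕ) < ℓ), (a i + (t i - 1) * m) := by
    refine Finset.sum_le_sum fun i hi => ?_
    simp only [Finset.mem_filter] at hi
    have him : m ≤ a i := ha (by simp only [Fin.le_def, Fin.val_mk]; omega)
    nlinarith [h1 i]
  have hb2 : ∑ i ∈ Finset.univ.filter (fun i : Fin n => ¬ (i : ℕ) < ℓ), t i * a i ≤
      ∑ i ∈ Finset.univ.filter (fun i : Fin n => ¬ (i : ℕ) < ℓ), t i * m := by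
    refine Finset.sum_le_sum fun i hi => ?_
    simp only [Finset.mem_filter] at hi
    have him : a i ≤ m := ha (by simp only [Fin.le_def, Fin.val_mk]; omega)
    exact mul_le_mul_of_nonneg_left him (h0 i)
  have e1 : ∑ i ∈ Finset.univ.filter (fun i : Fin n => (i : ℕ) < ℓ), (a i + (t i - 1) * m)
      = (∑ i ∈ Finset.univ.filter (fun i : Fin n => (i : ℕ) < ℓ), a i)
        + ((∑ i ∈ Finset.univ.filter (fun i : Fin n => (i : ℕ) < ℓ), t i) - ℓ) * m := by
    rw [Finset.sum_add_distrib, ← Finset.sum_mul, Finset.sum_sub_distrib, Finset.sum_const,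
      hcard, nsmul_eq_mul, mul_one]
  have e2 : ∑ i ∈ Finset.univ.filter (fun i : Fin n => ¬ (i : ℕ) < ℓ), t i * m
      = (∑ i ∈ Finset.univ.filter (fun i : Fin n => ¬ (i : ℕ) < ℓ), t i) * m := by
    rw [Finset.sum_mul]
  have hTt : (∑ i ∈ Finset.univ.filter (fun i : Fin n => (i : ℕ) < ℓ), t i)
      + (∑ i ∈ Finset.univ.filter (fun i : Fin n => ¬ (i : ℕ) < ℓ), t i) = (ℓ : ℝ) := by
    rw [hsplit2, hsum]
  have key : ((∑ i ∈ Finset.univ.filter (fun i : Fin n => (i : ℕ) < ℓ), t i) - ℓ) * m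
      + (∑ i ∈ Finset.univ.filter (fun i : Fin n => ¬ (i : ℕ) < ℓ), t i) * m = 0 := by
    linear_combination m * hTt
  linarith [hb1, hb2]

private lemma conj_mul_conj' {n : ℕ} (V A B : Matrix (Fin n) (Fin n) ℂ) (hV : Vᴴ * V = 1) :
    (V * A * Vᴴ) * (V * B * Vᴴ) = V * (A * B) * Vᴴ := by
  simp only [Matrix.mul_assoc]
  rw [← Matrix.mul_assoc Vᴴ V (B * Vᴴ), hV, Matrix.one_mul]

private lemma trace_conj' {n : ℕ} (V M : Matrix (Fin n) (Fin n) ℂ) (hV : Vᴴ * V = 1) :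
    (V * M * Vᴴ).trace = M.trace := by
  rw [Matrix.trace_mul_comm (V * M) Vᴴ, ← Matrix.mul_assoc, hV, Matrix.one_mul]

private lemma cyc' {n : ℕ} (Dk A M : Matrix (Fin n) (Fin n) ℂ) :
    (Dk * A * Dkᴴ * M).trace = (A * (Dkᴴ * M * Dk)).trace := by
  rw [Matrix.mul_assoc (Dk * A) Dkᴴ M, Matrix.trace_mul_comm (Dk * A) (Dkᴴ * M),
    Matrix.mul_assoc Dkᴴ M (Dk * A), ← Matrix.mul_assoc M Dk A,
    ← Matrix.mul_assoc Dkᴴ (M * Dk) A, Matrix.trace_mul_comm, ← Matrix.mul_assoc Dkᴴ M Dk]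

/-- If `Phi` is a correlation matrix (PSD with unit diagonal) and `X` is Hermitian, then
`X` majorizes the Schur product `Phi ∘ X`: the decreasingly-ordered eigenvalue sequence of `X`
majorizes that of `Phi ∘ X`. -/
theorem hermitian_majorizes_hadamard_with_correlation {n : ℕ}
    (Φ X : Matrix (Fin n) (Fin n) ℂ)
    (hΦ : Φ.PosSemidef) (hdiag : ∀ i, Φ i i = 1)
    (hX : X.IsHermitian) (hY : (Matrix.hadamard Φ X).IsHermitian)
    (α β : Fin n → ℝ) (hαm : Antitone α) (hβm : Antitone β)
    (hα : ∃ σ : Equiv.Perm (Fin n), α = hX.eigenvalues ∘ σ)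
    (hβ : ∃ σ : Equiv.Perm (Fin n), β = hY.eigenvalues ∘ σ) :
    (∀ ℓ : ℕ, ℓ < n →
      ∑ i ∈ Finset.univ.filter (fun i : Fin n => (i : ℕ) < ℓ), β i ≤
        ∑ i ∈ Finset.univ.filter (fun i : Fin n => (i : ℕ) < ℓ), α i) ∧
    ∑ i, α i = ∑ i, β i := by
  classical
  set Y : Matrix (Fin n) (Fin n) ℂ := Matrix.hadamard Φ X with hYdef
  obtain ⟨σX, hσX⟩ := hα
  obtain ⟨σY, hσY⟩ := hβ
  obtain ⟨B, hB⟩ : ∃ B : Matrix (Fin n) (Fin n) ℂ, Φ = Bᴴ * B := by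
    open scoped MatrixOrder in exact CStarAlgebra.nonneg_iff_eq_star_mul_self.mp hΦ.nonneg
  set D : Fin n → Matrix (Fin n) (Fin n) ℂ :=
    fun k => Matrix.diagonal (fun i => B k i) with hDdef
  have hYsum : ∑ k, (D k)ᴴ * X * (D k) = Y := by
    ext i j
    simp only [hDdef, Matrix.sum_apply, Matrix.diagonal_conjTranspose, Matrix.mul_diagonal,
      Matrix.diagonal_mul, hYdef, Matrix.hadamard_apply, Pi.star_apply]
    rw [hB, Matrix.mul_apply, Finset.sum_mul]
    exact Finset.sum_congr rfl fun k _ => by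
      simp only [Matrix.conjTranspose_apply]; ring
  have hDD : ∑ k, (D k) * (D k)ᴴ = 1 := by
    ext i j
    simp only [hDdef, Matrix.sum_apply, Matrix.diagonal_conjTranspose,
      Matrix.diagonal_mul_diagonal, Matrix.diagonal_apply, Pi.star_apply, if_true,
      eq_self_iff_true]
    by_cases h : i = j
    · subst h
      simp only [if_pos rfl, if_true, eq_self_iff_true]
      have hd := hdiag i
      rw [hB, Matrix.mul_apply] at hd
      simp only [Matrix.conjTranspose_apply] at hd
      rw [Matrix.one_apply_eq, ← hd]
      exact Finset.sum_congr rfl fun k _ => by ring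
    · simp [h, Matrix.one_apply_ne h]
  have hDD' : ∑ k, (D k)ᴴ * (D k) = 1 := by
    ext i j
    simp only [hDdef, Matrix.sum_apply, Matrix.diagonal_conjTranspose,
      Matrix.diagonal_mul_diagonal, Matrix.diagonal_apply, Pi.star_apply, if_true,
      eq_self_iff_true]
    by_cases h : i = j
    · subst h
      simp only [if_pos rfl, if_true, eq_self_iff_true]
      have hd := hdiag i
      rw [hB, Matrix.mul_apply] at hd
      simp only [Matrix.conjTranspose_apply] at hd
      rw [Matrix.one_apply_eq, ← hd]
    · simp [h, Matrix.one_apply_ne h]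
  set U : Matrix (Fin n) (Fin n) ℂ := (hX.eigenvectorUnitary : Matrix (Fin n) (Fin n) ℂ)
    with hUdef
  set V : Matrix (Fin n) (Fin n) ℂ := (hY.eigenvectorUnitary : Matrix (Fin n) (Fin n) ℂ)
    with hVdef
  have hU1 : Uᴴ * U = 1 := by
    rw [hUdef, ← Matrix.star_eq_conjTranspose]
    exact Matrix.mem_unitaryGroup_iff'.mp (hX.eigenvectorUnitary).2
  have hU2 : U * Uᴴ = 1 := by
    rw [hUdef, ← Matrix.star_eq_conjTranspose]
    exact Matrix.mem_unitaryGroup_iff.mp (hX.eigenvectorUnitary).2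
  have hV1 : Vᴴ * V = 1 := by
    rw [hVdef, ← Matrix.star_eq_conjTranspose]
    exact Matrix.mem_unitaryGroup_iff'.mp (hY.eigenvectorUnitary).2
  have hV2 : V * Vᴴ = 1 := by
    rw [hVdef, ← Matrix.star_eq_conjTranspose]
    exact Matrix.mem_unitaryGroup_iff.mp (hY.eigenvectorUnitary).2
  have hXspec : X = U * Matrix.diagonal (RCLike.ofReal ∘ hX.eigenvalues) * Uᴴ := by
    rw [hUdef, ← Matrix.star_eq_conjTranspose]
    exact hX.spectral_theorem
  have hYspec : Y = V * Matrix.diagonal (RCLike.ofReal ∘ hY.eigenvalues) * Vᴴ := by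
    rw [hVdef, ← Matrix.star_eq_conjTranspose]
    exact hY.spectral_theorem
  have htrX : X.trace = ((∑ i, hX.eigenvalues i : ℝ) : ℂ) := by
    conv_lhs => rw [hXspec]
    rw [trace_conj' _ _ hU1, Matrix.trace_diagonal]
    simp only [Function.comp_apply]
    exact (RCLike.ofReal_sum _ _).symm
  have htrY : Y.trace = ((∑ i, hY.eigenvalues i : ℝ) : ℂ) := by
    conv_lhs => rw [hYspec]
    rw [trace_conj' _ _ hV1, Matrix.trace_diagonal]
    simp only [Function.comp_apply]
    exact (RCLike.ofReal_sum _ _).symm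
  constructor
  · -- partial sums
    intro ℓ hℓ
    set T := Finset.univ.filter (fun i : Fin n => (i : ℕ) < ℓ) with hT
    set S := T.image σY with hS
    set E : Matrix (Fin n) (Fin n) ℂ :=
      Matrix.diagonal (fun j => if j ∈ S then 1 else 0) with hE
    have hEpsd : E.PosSemidef := Matrix.posSemidef_diagonal_iff.mpr fun j => by
      by_cases hj : j ∈ S <;> simp [hj, Complex.nonneg_iff]
    have h1Epsd : (1 - E).PosSemidef := by
      rw [hE, ← Matrix.diagonal_one, Matrix.diagonal_sub]
      exact Matrix.posSemidef_diagonal_iff.mpr fun j => by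
        by_cases hj : j ∈ S <;> simp [hj, Complex.nonneg_iff]
    set P := V * E * Vᴴ with hP
    have hPpsd : P.PosSemidef := hEpsd.mul_mul_conjTranspose_same V
    have h1Ppsd : (1 - P).PosSemidef := by
      have h : V * (1 - E) * Vᴴ = 1 - P := by
        rw [Matrix.mul_sub, Matrix.mul_one, Matrix.sub_mul, hV2, hP]
      exact h ▸ h1Epsd.mul_mul_conjTranspose_same V
    have hScard : S.card = ℓ := by
      rw [hS, Finset.card_image_of_injective _ σY.injective, hT, card_filter_lt' hℓ.le]
    have htrE : E.trace = (ℓ : ℂ) := by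
      rw [hE, Matrix.trace_diagonal]
      simp [Finset.sum_ite_mem, Finset.univ_inter, Finset.sum_const, hScard]
    have htrPY : (P * Y).trace = ((∑ i ∈ T, β i : ℝ) : ℂ) := by
      conv_lhs => rw [hYspec]
      rw [hP, conj_mul_conj' V E _ hV1, trace_conj' _ _ hV1, hE,
        Matrix.diagonal_mul_diagonal, Matrix.trace_diagonal]
      simp only [ite_mul, one_mul, zero_mul, Function.comp_apply]
      rw [Finset.sum_ite_mem, Finset.univ_inter, hS,
        Finset.sum_image (fun a _ b _ h => σY.injective h), hσY, Complex.ofReal_sum]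
      exact Finset.sum_congr rfl fun i _ => rfl
    set Q := ∑ k, D k * P * (D k)ᴴ with hQ
    have hQpsd : Q.PosSemidef := psd_sum' _ fun k => hPpsd.mul_mul_conjTranspose_same (D k)
    have h1Qpsd : (1 - Q).PosSemidef := by
      have h : ∑ k, D k * (1 - P) * (D k)ᴴ = 1 - Q := by
        rw [Finset.sum_congr rfl (fun k _ => by
          rw [Matrix.mul_sub, Matrix.mul_one, Matrix.sub_mul] :
            ∀ k ∈ Finset.univ, D k * (1 - P) * (D k)ᴴ
              = D k * (D k)ᴴ - D k * P * (D k)ᴴ),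
          Finset.sum_sub_distrib, hDD, hQ]
      exact h ▸ psd_sum' _ fun k => h1Ppsd.mul_mul_conjTranspose_same (D k)
    have htrQX : (Q * X).trace = (P * Y).trace := by
      rw [hQ, Finset.sum_mul, Matrix.trace_sum]
      calc ∑ k, (D k * P * (D k)ᴴ * X).trace
          = ∑ k, (P * ((D k)ᴴ * X * D k)).trace :=
            Finset.sum_congr rfl fun k _ => cyc' (D k) P X
        _ = (P * ∑ k, (D k)ᴴ * X * D k).trace := by
            rw [Matrix.mul_sum, Matrix.trace_sum]
        _ = (P * Y).trace := by rw [hYsum]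
    have htrQ : Q.trace = (ℓ : ℂ) := by
      have h1 : Q.trace = ∑ k, (D k * P * (D k)ᴴ * 1).trace := by
        rw [hQ, Matrix.trace_sum]
        exact Finset.sum_congr rfl fun k _ => by rw [Matrix.mul_one]
      rw [h1]
      calc ∑ k, (D k * P * (D k)ᴴ * 1).trace
          = ∑ k, (P * ((D k)ᴴ * 1 * D k)).trace :=
            Finset.sum_congr rfl fun k _ => cyc' (D k) P 1
        _ = (P * ∑ k, (D k)ᴴ * 1 * D k).trace := by
            rw [Matrix.mul_sum, Matrix.trace_sum]
        _ = (P * 1).trace := by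
            rw [show ∑ k, (D k)ᴴ * 1 * D k = 1 from by
              simpa only [Matrix.mul_one] using hDD']
        _ = E.trace := by rw [Matrix.mul_one, hP, trace_conj' _ _ hV1]
        _ = (ℓ : ℂ) := htrE
    set R := Uᴴ * Q * U with hR
    have hRpsd : R.PosSemidef := hQpsd.conjTranspose_mul_mul_same U
    have h1Rpsd : (1 - R).PosSemidef := by
      have h : Uᴴ * (1 - Q) * U = 1 - R := by
        rw [Matrix.mul_sub, Matrix.mul_one, Matrix.sub_mul, hU1, hR]
      exact h ▸ h1Qpsd.conjTranspose_mul_mul_same U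
    have htrR : R.trace = (ℓ : ℂ) := by
      rw [hR, Matrix.trace_mul_comm (Uᴴ * Q) U, ← Matrix.mul_assoc, hU2, Matrix.one_mul, htrQ]
    have htrRX : (Q * X).trace
        = (R * Matrix.diagonal (RCLike.ofReal ∘ hX.eigenvalues)).trace := by
      conv_lhs => rw [hXspec]
      rw [← Matrix.mul_assoc Q (U * Matrix.diagonal (RCLike.ofReal ∘ hX.eigenvalues)) Uᴴ,
        Matrix.trace_mul_comm, ← Matrix.mul_assoc Uᴴ Q _,
        ← Matrix.mul_assoc (Uᴴ * Q) U _, hR]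
    have hdiagtr : (R * Matrix.diagonal (RCLike.ofReal ∘ hX.eigenvalues)).trace
        = ∑ i, R i i * (hX.eigenvalues i : ℂ) := by
      simp [Matrix.trace, Matrix.diag, Matrix.mul_diagonal]
    set q : Fin n → ℝ := fun i => (R i i).re with hq
    have hRdiag : ∀ i, R i i = ((q i : ℝ) : ℂ) := fun i => by
      have h2 := (Complex.nonneg_iff.mp (psd_diag' hRpsd i)).2
      apply Complex.ext <;> simp [hq, ← h2]
    have hq0 : ∀ i, 0 ≤ q i := fun i => (Complex.nonneg_iff.mp (psd_diag' hRpsd i)).1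
    have hq1 : ∀ i, q i ≤ 1 := fun i => by
      have h := psd_diag' h1Rpsd i
      have he : (1 - R) i i = 1 - R i i := by simp [Matrix.sub_apply, Matrix.one_apply_eq]
      rw [he] at h
      have h1 := (Complex.nonneg_iff.mp h).1
      simp only [Complex.sub_re, Complex.one_re] at h1
      linarith [h1]
    have hsumq : ∑ i, q i = (ℓ : ℝ) := by
      have hh : R.trace = ((∑ i, q i : ℝ) : ℂ) := by
        rw [Matrix.trace, Complex.ofReal_sum]
        exact Finset.sum_congr rfl fun i _ => hRdiag i
      rw [htrR] at hh
      exact_mod_cast hh.symm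
    have hmain : ∑ i ∈ T, β i = ∑ i, q i * hX.eigenvalues i := by
      have hc : ((∑ i ∈ T, β i : ℝ) : ℂ) = ((∑ i, q i * hX.eigenvalues i : ℝ) : ℂ) := by
        rw [← htrPY, ← htrQX, htrRX, hdiagtr, Complex.ofReal_sum]
        exact Finset.sum_congr rfl fun i _ => by
          rw [hRdiag i, Complex.ofReal_mul]
      exact_mod_cast hc
    have hre : ∑ i, q i * hX.eigenvalues i = ∑ i, q (σX i) * α i := by
      rw [hσX]
      exact (Equiv.sum_comp σX (fun i => q i * hX.eigenvalues i)).symm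
    rw [hmain, hre]
    exact weight_sum_le' hℓ (fun i => q (σX i)) α hαm (fun i => hq0 _) (fun i => hq1 _)
      (by rw [Equiv.sum_comp σX q]; exact hsumq)
  · -- trace equality
    have htrXY : Y.trace = X.trace := by
      rw [Matrix.trace, Matrix.trace]
      exact Finset.sum_congr rfl fun i _ => by
        simp [Matrix.diag, hYdef, Matrix.hadamard_apply, hdiag i]
    rw [htrX, htrY] at htrXY
    have hsum : ∑ i, hY.eigenvalues i = ∑ i, hX.eigenvalues i := by exact_mod_cast htrXY
    rw [hσX, hσY]
    calc ∑ i, (hX.eigenvalues ∘ σX) i = ∑ i, hX.eigenvalues i := Equiv.sum_comp σX _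
      _ = ∑ i, hY.eigenvalues i := hsum.symm
      _ = ∑ i, (hY.eigenvalues ∘ σY) i := (Equiv.sum_comp σY _).symm
end

section
/- In the setting of the previous lemma's proof: if X and Y = Φ ∘ X are Hermitian with spectral decompositions X = Σ_j α_j P_j and Y = Σ_i β_i Q_i into rank-one orthogonal projectors, and Φ is a correlation matrix, then the matrix P with entries p_{ij} = Tr(Q_i (Φ ∘ P_j)) is doubly stochastic and satisfies β_i = Σ_j p_{ij} α_j for all i. -/
open Matrix Finset
open scoped Kronecker Classical ComplexOrder

section Aux

variable {n : ℕ}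

lemma aux_psd_diag_nonneg {M : Matrix (Fin n) (Fin n) ℂ} (hM : M.PosSemidef) (i : Fin n) :
    0 ≤ M i i := by
  have := hM.dotProduct_mulVec_nonneg (Pi.single i 1)
  simpa [dotProduct, Matrix.mulVec, Pi.single_apply, Finset.sum_ite_eq,
    Finset.sum_ite_eq'] using this

lemma aux_trace_mul_psd {A B : Matrix (Fin n) (Fin n) ℂ}
    (hA : A.PosSemidef) (hB : B.PosSemidef) :
    ∃ p : ℝ, 0 ≤ p ∧ (A * B).trace = (p : ℂ) := by
  obtain ⟨C, rfl⟩ : ∃ C : Matrix (Fin n) (Fin n) ℂ, A = Cᴴ * C := by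
    open scoped MatrixOrder in
    exact CStarAlgebra.nonneg_iff_eq_star_mul_self.mp hA.nonneg
  have h1 : (Cᴴ * C * B).trace = (C * B * Cᴴ).trace := by
    rw [Matrix.trace_mul_cycle, Matrix.trace_mul_cycle]
  have hps : (C * B * Cᴴ).PosSemidef := hB.mul_mul_conjTranspose_same C
  have h2 : 0 ≤ (C * B * Cᴴ).trace := by
    rw [Matrix.trace]
    exact Finset.sum_nonneg fun i _ => aux_psd_diag_nonneg hps i
  rw [Complex.nonneg_iff] at h2
  exact ⟨((C * B * Cᴴ).trace).re, h2.1, by rw [h1]; exact (Complex.ext (by simp) (by simp [h2.2]))⟩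

lemma aux_schur_psd {A B : Matrix (Fin n) (Fin n) ℂ}
    (hA : A.PosSemidef) (hB : B.PosSemidef) :
    (Matrix.hadamard A B).PosSemidef := by
  have herm : (Matrix.hadamard A B).IsHermitian := by
    ext i j
    rw [Matrix.conjTranspose_apply, Matrix.hadamard_apply, Matrix.hadamard_apply, star_mul',
      ← Matrix.conjTranspose_apply A, ← Matrix.conjTranspose_apply B, hA.1.eq, hB.1.eq]
  obtain ⟨C, rfl⟩ : ∃ C : Matrix (Fin n) (Fin n) ℂ, A = Cᴴ * C := by
    open scoped MatrixOrder in
    exact CStarAlgebra.nonneg_iff_eq_star_mul_self.mp hA.nonneg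
  refine Matrix.PosSemidef.of_dotProduct_mulVec_nonneg herm fun x => ?_
  have key : (star x) ⬝ᵥ ((Matrix.hadamard (Cᴴ * C) B).mulVec x)
      = ∑ k, (star fun i => C k i * x i) ⬝ᵥ (B.mulVec fun i => C k i * x i) := by
    have lhs : (star x) ⬝ᵥ ((Matrix.hadamard (Cᴴ * C) B).mulVec x)
        = ∑ i, ∑ j, ∑ k, star (x i) * star (C k i) * C k j * B i j * x j := by
      simp only [dotProduct, Matrix.mulVec, Matrix.hadamard_apply, Matrix.mul_apply,
        Pi.star_apply, Matrix.conjTranspose_apply, Finset.sum_mul, Finset.mul_sum]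
      refine Finset.sum_congr rfl fun i _ => Finset.sum_congr rfl fun j _ =>
        Finset.sum_congr rfl fun k _ => by ring
    have rhs : (∑ k, (star fun i => C k i * x i) ⬝ᵥ (B.mulVec fun i => C k i * x i))
        = ∑ k, ∑ i, ∑ j, star (x i) * star (C k i) * C k j * B i j * x j := by
      simp only [dotProduct, Matrix.mulVec, Pi.star_apply, star_mul',
        Finset.sum_mul, Finset.mul_sum]
      refine Finset.sum_congr rfl fun k _ => Finset.sum_congr rfl fun i _ =>
        Finset.sum_congr rfl fun j _ => by ring
    rw [lhs, rhs]
    rw [show (∑ i, ∑ j, ∑ k, star (x i) * star (C k i) * C k j * B i j * x j)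
        = ∑ i, ∑ k, ∑ j, star (x i) * star (C k i) * C k j * B i j * x j from
      Finset.sum_congr rfl fun i _ => Finset.sum_comm]
    exact Finset.sum_comm
  rw [key]
  exact Finset.sum_nonneg fun k _ => hB.dotProduct_mulVec_nonneg _

lemma aux_proj_psd {M : Matrix (Fin n) (Fin n) ℂ}
    (h1 : M.IsHermitian) (h2 : M * M = M) : M.PosSemidef := by
  have h3 : M = Mᴴ * M := by rw [h1.eq, h2]
  rw [h3]
  exact Matrix.posSemidef_conjTranspose_mul_self M

end Aux

/-- In the setting of the majorization lemma
`X = ∑ j, α j • P j` and `Phi ∘ X = ∑ i, β i • Q i` into rank-one orthogonal projectors,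
the matrix with entries `p i j = Tr (Q i * (Phi ∘ P j))` is doubly stochastic (entries are
non-negative reals, all row and column sums are 1) and `β i = ∑ j, p i j * α j`. -/
theorem doubly_stochastic_spectral_transfer {n : ℕ}
    (Φ X : Matrix (Fin n) (Fin n) ℂ)
    (hΦ : Φ.PosSemidef) (hdiag : ∀ i, Φ i i = 1)
    (α β : Fin n → ℝ) (P Q : Fin n → Matrix (Fin n) (Fin n) ℂ)
    (hP : ∀ j, (P j).IsHermitian ∧ P j * P j = P j ∧ (P j).trace = 1)
    (hQ : ∀ i, (Q i).IsHermitian ∧ Q i * Q i = Q i ∧ (Q i).trace = 1)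
    (hPsum : ∑ j, P j = 1) (hQsum : ∑ i, Q i = 1)
    (hXdec : X = ∑ j, (α j : ℂ) • P j)
    (hYdec : Matrix.hadamard Φ X = ∑ i, (β i : ℂ) • Q i) :
    (∀ i j, ∃ p : ℝ, 0 ≤ p ∧ (Q i * Matrix.hadamard Φ (P j)).trace = (p : ℂ)) ∧
    (∀ i, ∑ j, (Q i * Matrix.hadamard Φ (P j)).trace = 1) ∧
    (∀ j, ∑ i, (Q i * Matrix.hadamard Φ (P j)).trace = 1) ∧
    (∀ i, (β i : ℂ) = ∑ j, (Q i * Matrix.hadamard Φ (P j)).trace * (α j : ℂ)) := by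
  have hQpsd : ∀ i, (Q i).PosSemidef := fun i => aux_proj_psd (hQ i).1 (hQ i).2.1
  have hPpsd : ∀ j, (P j).PosSemidef := fun j => aux_proj_psd (hP j).1 (hP j).2.1
  have hHad : ∀ j, (Matrix.hadamard Φ (P j)).PosSemidef := fun j => aux_schur_psd hΦ (hPpsd j)
  have hhadsum : ∑ j, Matrix.hadamard Φ (P j) = 1 := by
    have h : Matrix.hadamard Φ (∑ j, P j) = ∑ j, Matrix.hadamard Φ (P j) := by
      ext a b
      simp [Matrix.hadamard_apply, Matrix.sum_apply, Finset.mul_sum]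
    rw [← h, hPsum, Matrix.hadamard_one,
      show Φ.diag = fun _ => (1 : ℂ) from funext hdiag, Matrix.diagonal_one]
  refine ⟨fun i j => aux_trace_mul_psd (hQpsd i) (hHad j), fun i => ?_, fun j => ?_, fun i => ?_⟩
  · rw [← Matrix.trace_sum, ← Finset.mul_sum, hhadsum, mul_one, (hQ i).2.2]
  · rw [← Matrix.trace_sum, ← Finset.sum_mul, hQsum, one_mul]
    have h : (Matrix.hadamard Φ (P j)).trace = (P j).trace := by
      simp [Matrix.trace, Matrix.diag, Matrix.hadamard_apply, hdiag]
    rw [h, (hP j).2.2]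
  · -- orthogonality of the Q's
    choose p hp using fun k => aux_trace_mul_psd (hQpsd i) (hQpsd k)
    have hsum : ∑ k, ((p k : ℂ)) = 1 := by
      rw [show (∑ k, ((p k : ℂ))) = ∑ k, (Q i * Q k).trace from
        Finset.sum_congr rfl fun k _ => ((hp k).2).symm,
        ← Matrix.trace_sum, ← Finset.mul_sum, hQsum, mul_one, (hQ i).2.2]
    have hsumR : ∑ k, p k = 1 := by exact_mod_cast hsum
    have hpi : p i = 1 := by
      have : ((p i : ℂ)) = 1 := by rw [← (hp i).2, (hQ i).2.1, (hQ i).2.2]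
      exact_mod_cast this
    have herase : ∑ k ∈ Finset.univ.erase i, p k = 0 := by
      have := Finset.add_sum_erase Finset.univ p (Finset.mem_univ i)
      rw [hsumR] at this
      linarith [this, hpi]
    have horth : ∀ k, k ≠ i → (Q i * Q k).trace = 0 := by
      intro k hk
      have h0 : p k = 0 := by
        have := (Finset.sum_eq_zero_iff_of_nonneg
          (fun k _ => (hp k).1)).mp herase k (Finset.mem_erase.mpr ⟨hk, Finset.mem_univ k⟩)
        exact this
      rw [(hp k).2, h0]; simp
    have hXh : Matrix.hadamard Φ X = ∑ j, (α j : ℂ) • Matrix.hadamard Φ (P j) := by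
      rw [hXdec]
      ext a b
      simp [Matrix.hadamard_apply, Matrix.sum_apply, Finset.mul_sum, mul_left_comm]
    have hB : (Q i * Matrix.hadamard Φ X).trace = (β i : ℂ) := by
      rw [hYdec, Finset.mul_sum, Matrix.trace_sum]
      rw [Finset.sum_congr rfl fun k (_ : k ∈ Finset.univ) =>
        (by rw [Matrix.mul_smul, Matrix.trace_smul, smul_eq_mul] :
          (Q i * ((β k : ℂ) • Q k)).trace = (β k : ℂ) * (Q i * Q k).trace)]
      rw [Finset.sum_eq_single i (fun k _ hk => by rw [horth k hk, mul_zero])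
        (fun h => absurd (Finset.mem_univ i) h)]
      rw [(hQ i).2.1, (hQ i).2.2, mul_one]
    rw [← hB, hXh, Finset.mul_sum, Matrix.trace_sum]
    exact Finset.sum_congr rfl fun j _ => by
      rw [Matrix.mul_smul, Matrix.trace_smul, smul_eq_mul, mul_comm]
end

section
/- Let A ∈ ℝ^{n×n} be symmetric, non-negative, and irreducible, D a diagonal matrix with non-negative entries, k > 1 a real number, and suppose there exists a real correlation matrix Φ with Φ ∘ (D − A) ≥ D + (1/(k−1))A entrywise. Then λ_max(D − A) ≥ λ_max(D + (1/(k−1))A). -/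
open Matrix Finset
open scoped Kronecker Classical

/-- A matrix is irreducible if every nonempty proper subset of indices has an edge leaving it. -/
def Matrix.IsIrreducible' {n : ℕ} (M : Matrix (Fin n) (Fin n) ℝ) : Prop :=
  ∀ S : Finset (Fin n), S.Nonempty → S ≠ Finset.univ → ∃ i ∈ S, ∃ j ∉ S, M i j ≠ 0

section Aux
variable {n : ℕ}

private lemma quad_nonneg {P : Matrix (Fin n) (Fin n) ℝ} (hP : P.PosSemidef) (x : Fin n → ℝ) :
    0 ≤ x ⬝ᵥ P *ᵥ x := by simpa using hP.dotProduct_mulVec_nonneg x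

private lemma herm_symm {P : Matrix (Fin n) (Fin n) ℝ} (hP : P.IsHermitian) (i j : Fin n) :
    P j i = P i j := by
  rw [← hP.apply i j]; simp

private lemma schur_psd {Φ X : Matrix (Fin n) (Fin n) ℝ} (hΦ : Φ.PosSemidef) (hX : X.PosSemidef) :
    (Matrix.hadamard Φ X).PosSemidef := by
  exact hΦ.hadamard hX



lemma spec_eq {M : Matrix (Fin n) (Fin n) ℝ} (hM : M.IsHermitian) :
    spectrum ℝ M = Set.range hM.eigenvalues :=
  Matrix.IsHermitian.spectrum_real_eq_range_eigenvalues hM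

lemma eig_le_lamMax {M : Matrix (Fin n) (Fin n) ℝ} (hM : M.IsHermitian) (i : Fin n) :
    hM.eigenvalues i ≤ lamMax M :=
  le_csSup (Matrix.finite_real_spectrum (A := M)).bddAbove (hM.eigenvalues_mem_spectrum_real i)

lemma lamMax_mem [NeZero n] {M : Matrix (Fin n) (Fin n) ℝ} (hM : M.IsHermitian) :
    ∃ i, hM.eigenvalues i = lamMax M := by
  have h1 : (spectrum ℝ M).Nonempty := by
    rw [spec_eq hM]; exact Set.range_nonempty _
  have h2 := h1.csSup_mem (Matrix.finite_real_spectrum (A := M))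
  rw [spec_eq hM] at h2
  obtain ⟨i, hi⟩ := h2
  exact ⟨i, by rw [hi, lamMax, spec_eq hM]⟩

lemma psd_shift {N : Matrix (Fin n) (Fin n) ℝ} (hN : N.IsHermitian) :
    (lamMax N • (1 : Matrix (Fin n) (Fin n) ℝ) - N).PosSemidef := by
  have hH : (lamMax N • (1 : Matrix (Fin n) (Fin n) ℝ) - N).IsHermitian := by
    unfold Matrix.IsHermitian
    rw [Matrix.conjTranspose_sub, Matrix.conjTranspose_smul, hN.eq]
    simp
  refine hH.posSemidef_iff_eigenvalues_nonneg.mpr fun i => show 0 ≤ hH.eigenvalues i from ?_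
  have hmem := hH.eigenvalues_mem_spectrum_real i
  set μ := hH.eigenvalues i with hμ
  have hsp : lamMax N • (1 : Matrix (Fin n) (Fin n) ℝ) - N
      = algebraMap ℝ (Matrix (Fin n) (Fin n) ℝ) (lamMax N) - N := by
    rw [Algebra.algebraMap_eq_smul_one]
  rw [hsp, ← spectrum.singleton_sub_eq] at hmem
  obtain ⟨a, ha, b, hb, hab⟩ := hmem
  rw [Set.mem_singleton_iff] at ha
  have hble : b ≤ lamMax N := le_csSup (Matrix.finite_real_spectrum (A := N)).bddAbove hb
  simp only at hab
  linarith [hab, ha]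

end Aux

/-- If `A` is symmetric, non-negative and irreducible, `D = diagonal d` with `d ≥ 0`,
`k > 1`, and some real correlation matrix `Phi` satisfies
`Phi ∘ (D - A) ≥ D + (1/(k-1)) A` entrywise, then
`lamMax (D - A) ≥ lamMax (D + (1/(k-1)) A)`. -/
theorem lamMax_sub_ge_of_correlation {n : ℕ} (A : Matrix (Fin n) (Fin n) ℝ)
    (d : Fin n → ℝ) (k : ℝ)
    (hAsymm : A.IsSymm) (hA0 : ∀ i j, 0 ≤ A i j) (hirr : A.IsIrreducible')
    (hd : ∀ i, 0 ≤ d i) (hk : 1 < k)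
    (Φ : Matrix (Fin n) (Fin n) ℝ) (hΦ : Φ.PosSemidef) (hΦdiag : ∀ i, Φ i i = 1)
    (hineq : ∀ i j,
      (Matrix.diagonal d + (1 / (k - 1)) • A) i j ≤
        Matrix.hadamard Φ (Matrix.diagonal d - A) i j) :
    lamMax (Matrix.diagonal d + (1 / (k - 1)) • A) ≤ lamMax (Matrix.diagonal d - A) := by
  rcases Nat.eq_zero_or_pos n with hn | hn
  · subst hn
    have hsp : ∀ M : Matrix (Fin 0) (Fin 0) ℝ, spectrum ℝ M = ∅ := fun M =>
      Set.eq_empty_of_forall_notMem fun x hx => (spectrum.mem_iff.mp hx)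
        (isUnit_of_subsingleton _)
    simp [lamMax, hsp]
  haveI : NeZero n := ⟨hn.ne'⟩
  set c : ℝ := 1 / (k - 1) with hc
  have hk1 : 0 < k - 1 := by linarith
  have hcpos : 0 < c := by rw [hc]; positivity
  set M := Matrix.diagonal d + c • A with hMdef
  set N := Matrix.diagonal d - A with hNdef
  have hAh : A.IsHermitian := by
    rw [Matrix.IsHermitian, Matrix.conjTranspose_eq_transpose_of_trivial]; exact hAsymm
  have hMh : M.IsHermitian := by
    rw [Matrix.IsHermitian, hMdef, Matrix.conjTranspose_add, Matrix.conjTranspose_smul,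
      (Matrix.isHermitian_diagonal d).eq, hAh.eq, star_trivial]
  have hNh : N.IsHermitian := (Matrix.isHermitian_diagonal d).sub hAh
  have hM0 : ∀ i j, 0 ≤ M i j := by
    intro i j
    rw [hMdef]
    by_cases h : i = j
    · subst h
      simp only [Matrix.add_apply, Matrix.smul_apply, Matrix.diagonal_apply_eq, smul_eq_mul]
      have := hA0 i i; have := hd i; positivity
    · simp only [Matrix.add_apply, Matrix.smul_apply, Matrix.diagonal_apply_ne _ h, smul_eq_mul,
        zero_add]
      exact mul_nonneg hcpos.le (hA0 i j)
  -- eigenvector for lamMax M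
  obtain ⟨i₀, hi₀⟩ := lamMax_mem hMh
  set w : Fin n → ℝ := ⇑(hMh.eigenvectorBasis i₀) with hwdef
  have hw : M *ᵥ w = lamMax M • w := by
    rw [hwdef]
    rw [hMh.mulVec_eigenvectorBasis i₀, hi₀]
  have hnorm1 : ‖hMh.eigenvectorBasis i₀‖ = 1 := hMh.eigenvectorBasis.orthonormal.1 i₀
  have hnorm : ∑ i, w i ^ 2 = 1 := by
    have h2 := EuclideanSpace.norm_eq (hMh.eigenvectorBasis i₀)
    rw [hnorm1] at h2
    have h3 : ∑ i, ‖(hMh.eigenvectorBasis i₀) i‖ ^ 2 = 1 := by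
      have h4 : (0:ℝ) ≤ ∑ i, ‖(hMh.eigenvectorBasis i₀) i‖ ^ 2 :=
        Finset.sum_nonneg fun i _ => sq_nonneg _
      nlinarith [Real.sq_sqrt h4]
    simpa [hwdef, Real.norm_eq_abs, sq_abs] using h3
  set v : Fin n → ℝ := fun i => |w i| with hvdef
  have hvnorm : ∑ i, v i ^ 2 = 1 := by simp only [hvdef, sq_abs]; exact hnorm
  have hq : ∀ (P : Matrix (Fin n) (Fin n) ℝ) (x : Fin n → ℝ),
      x ⬝ᵥ P *ᵥ x = ∑ i, ∑ j, x i * P i j * x j := by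
    intro P x
    simp only [dotProduct, Matrix.mulVec, Finset.mul_sum]
    exact Finset.sum_congr rfl fun i _ => Finset.sum_congr rfl fun j _ => by ring
  have hww : w ⬝ᵥ w = 1 := by
    simpa [dotProduct, sq] using hnorm
  have hvv : v ⬝ᵥ v = 1 := by
    simpa [dotProduct, sq] using hvnorm
  have step1 : lamMax M = w ⬝ᵥ M *ᵥ w := by
    rw [hw, dotProduct_smul, hww, smul_eq_mul, mul_one]
  have step2 : w ⬝ᵥ M *ᵥ w ≤ v ⬝ᵥ M *ᵥ v := by
    rw [hq, hq]
    refine Finset.sum_le_sum fun i _ => Finset.sum_le_sum fun j _ => ?_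
    calc w i * M i j * w j ≤ |w i * M i j * w j| := le_abs_self _
      _ = v i * M i j * v j := by
        rw [abs_mul, abs_mul, abs_of_nonneg (hM0 i j)]
  have step3 : v ⬝ᵥ M *ᵥ v ≤ v ⬝ᵥ (Matrix.hadamard Φ N) *ᵥ v := by
    rw [hq, hq]
    refine Finset.sum_le_sum fun i _ => Finset.sum_le_sum fun j _ => ?_
    have h1 : 0 ≤ v i := abs_nonneg _
    have h2 : 0 ≤ v j := abs_nonneg _
    have h3 := hineq i j
    nlinarith [mul_le_mul_of_nonneg_left (mul_le_mul_of_nonneg_right h3 h2) h1]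
  have hΦshift : Matrix.hadamard Φ (lamMax N • (1 : Matrix (Fin n) (Fin n) ℝ) - N)
      = lamMax N • (1 : Matrix (Fin n) (Fin n) ℝ) - Matrix.hadamard Φ N := by
    ext i j
    by_cases h : i = j
    · subst h
      simp [Matrix.hadamard_apply, Matrix.one_apply_eq, hΦdiag i, mul_sub]
    · simp [Matrix.hadamard_apply, Matrix.one_apply_ne h, mul_sub]
  have hshift : (lamMax N • (1 : Matrix (Fin n) (Fin n) ℝ) - Matrix.hadamard Φ N).PosSemidef :=
    hΦshift ▸ schur_psd hΦ (psd_shift hNh)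
  have step4 : v ⬝ᵥ (Matrix.hadamard Φ N) *ᵥ v ≤ lamMax N := by
    have h0 := quad_nonneg hshift v
    rw [Matrix.sub_mulVec, dotProduct_sub, Matrix.smul_mulVec,
      Matrix.one_mulVec, dotProduct_smul, hvv] at h0
    simpa using h0
  calc lamMax M = w ⬝ᵥ M *ᵥ w := step1
    _ ≤ v ⬝ᵥ M *ᵥ v := step2
    _ ≤ v ⬝ᵥ (Matrix.hadamard Φ N) *ᵥ v := step3
    _ ≤ lamMax N := step4
end

section
/- For every graph G with at least one edge, the clique number is at most the vector chromatic number: ω(G) ≤ χ_v(G). -/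
open Matrix Finset
open scoped Kronecker Classical

lemma simplex_vectors {n : ℕ} (hn : 2 ≤ n) :
    ∃ u : Fin n → EuclideanSpace ℝ (Fin n),
      (∀ i, ‖u i‖ = 1) ∧ ∀ i j : Fin n, i ≠ j →
        (inner ℝ (u i) (u j) : ℝ) = -(1/((n:ℝ)-1)) := by
  have h2 : (2:ℝ) ≤ (n:ℝ) := by exact_mod_cast hn
  have hs : (0:ℝ) < (n:ℝ) - 1 := by linarith
  have hnpos : (0:ℝ) < n := by linarith
  set s : ℝ := (n:ℝ) - 1 with hsdef
  set x : ℝ := Real.sqrt (s / n) with hx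
  set y : ℝ := -Real.sqrt (1 / (n * s)) with hy
  have hx2 : x ^ 2 = s / n := Real.sq_sqrt (by positivity)
  have hy2 : y ^ 2 = 1 / (n * s) := by
    rw [hy, neg_pow, Even.neg_one_pow (by norm_num), one_mul,
      Real.sq_sqrt (by positivity)]
  have hxy : x * y = -(1 / n) := by
    rw [hx, hy, mul_neg, ← Real.sqrt_mul (by positivity)]
    have : s / ↑n * (1 / (↑n * s)) = (1/n)^2 := by field_simp
    rw [this, Real.sqrt_sq (by positivity)]
  set d : ℝ := x - y with hd
  set u : Fin n → EuclideanSpace ℝ (Fin n) :=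
    fun i => (WithLp.toLp 2 (fun l => y + (if l = i then d else 0)) : EuclideanSpace ℝ (Fin n)) with hu
  have key : ∀ i j : Fin n, (inner ℝ (u i) (u j) : ℝ)
      = (n:ℝ) * y^2 + y*d + d*y + (if i = j then d^2 else 0) := by
    intro i j
    rw [hu, real_inner_comm, PiLp.inner_apply]
    simp only [RCLike.inner_apply, conj_trivial, PiLp.toLp_apply]
    have : ∀ l : Fin n, (y + if l = i then d else 0) * (y + if l = j then d else 0)
        = y*y + y*(if l = j then d else 0) + (if l = i then d else 0)*y
          + (if l = i then (if l = j then d*d else 0) else 0) := by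
      intro l; split_ifs <;> ring
    simp only [this]
    rw [Finset.sum_add_distrib, Finset.sum_add_distrib, Finset.sum_add_distrib]
    simp [Finset.mul_sum, Finset.sum_ite_eq', mul_comm, sq, Finset.card_univ]
  refine ⟨u, ?_, ?_⟩
  · intro i
    have h1 : (inner ℝ (u i) (u i) : ℝ) = 1 := by
      rw [key i i, if_pos rfl]
      have e : (n:ℝ)*y^2 + y*d + d*y + d^2 = x^2 + ((n:ℝ)-1)*y^2 := by rw [hd]; ring
      rw [e, hx2, hy2]
      field_simp
      rw [hsdef]; ring
    have := real_inner_self_eq_norm_sq (u i)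
    nlinarith [norm_nonneg (u i)]
  · intro i j hij
    rw [key i j, if_neg hij]
    have e : (n:ℝ)*y^2 + y*d + d*y + 0 = ((n:ℝ)-2)*y^2 + 2*(x*y) := by rw [hd]; ring
    rw [e, hy2, hxy]
    field_simp
    ring


lemma clique_bound {n : ℕ} {G : SimpleGraph (Fin n)} {k : ℝ} (hk : 2 ≤ k)
    {u : Fin n → EuclideanSpace ℝ (Fin n)} (hnorm : ∀ i, ‖u i‖ = 1)
    (hadj : ∀ i j, G.Adj i j → (inner ℝ (u i) (u j) : ℝ) ≤ -(1/(k-1)))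
    {s : Finset (Fin n)} (hs : G.IsClique s) : (s.card : ℝ) ≤ k := by
  set m : ℕ := s.card with hm
  rcases Nat.eq_zero_or_pos m with h0 | hpos
  · rw [h0]; norm_num; linarith
  have hk1 : (0:ℝ) < k - 1 := by linarith
  set c : ℝ := 1 / (k - 1) with hc
  have hcpos : 0 < c := by positivity
  have h1 : (0:ℝ) ≤ inner ℝ (∑ i ∈ s, u i) (∑ j ∈ s, u j) := real_inner_self_nonneg
  have h2 : (inner ℝ (∑ i ∈ s, u i) (∑ j ∈ s, u j) : ℝ)
      = ∑ i ∈ s, ∑ j ∈ s, (inner ℝ (u i) (u j) : ℝ) := by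
    rw [sum_inner]; exact Finset.sum_congr rfl fun i _ => inner_sum _ _ _
  have h3 : ∀ i ∈ s, ∑ j ∈ s, (inner ℝ (u i) (u j) : ℝ) ≤ 1 + ((m:ℝ) - 1) * (-c) := by
    intro i hi
    rw [← Finset.add_sum_erase s _ hi]
    have hii : (inner ℝ (u i) (u i) : ℝ) = 1 := by
      rw [real_inner_self_eq_norm_sq, hnorm i]; norm_num
    have hb : ∑ j ∈ s.erase i, (inner ℝ (u i) (u j) : ℝ) ≤ ((s.erase i).card : ℝ) * (-c) := by
      have := Finset.sum_le_card_nsmul (s.erase i) (fun j => (inner ℝ (u i) (u j) : ℝ)) (-c)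
        (fun j hj => hadj i j (hs hi (Finset.mem_of_mem_erase hj)
          (Ne.symm (Finset.ne_of_mem_erase hj))))
      rwa [nsmul_eq_mul] at this
    have hcard : ((s.erase i).card : ℝ) = (m:ℝ) - 1 := by
      rw [Finset.card_erase_of_mem hi, Nat.cast_sub hpos]; norm_num
    rw [hcard] at hb
    linarith [hii, hb]
  have h4 : ∑ i ∈ s, ∑ j ∈ s, (inner ℝ (u i) (u j) : ℝ)
      ≤ (m:ℝ) * (1 + ((m:ℝ) - 1) * (-c)) := by
    have := Finset.sum_le_card_nsmul s _ _ h3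
    rwa [nsmul_eq_mul] at this
  have h5 : (0:ℝ) ≤ (m:ℝ) * (1 + ((m:ℝ) - 1) * (-c)) := by
    rw [h2] at h1; linarith
  have hmpos : (0:ℝ) < m := by exact_mod_cast hpos
  have hck : c * (k - 1) = 1 := by rw [hc]; field_simp
  nlinarith [mul_pos hmpos hcpos, mul_pos hmpos hk1]

/-- The clique number is at most the vector chromatic number. -/
theorem cliqueNum_le_vecChromNum {n : ℕ} (G : SimpleGraph (Fin n))
    (he : G.edgeFinset.Nonempty) :
    (G.cliqueNum : ℝ) ≤ vecChromNum G := by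
  -- n ≥ 2
  obtain ⟨e, heE⟩ := he
  rw [SimpleGraph.mem_edgeFinset] at heE
  have hn2 : 2 ≤ n := by
    induction e with
    | _ a b =>
      have hab : G.Adj a b := heE
      have hne : a ≠ b := hab.ne
      have : ({a, b} : Finset (Fin n)).card ≤ Fintype.card (Fin n) :=
        Finset.card_le_univ _
      rwa [Finset.card_pair hne, Fintype.card_fin] at this
  obtain ⟨u₀, hu₀n, hu₀i⟩ := simplex_vectors hn2
  have hSne : {k : ℝ | 2 ≤ k ∧ ∃ u : Fin n → EuclideanSpace ℝ (Fin n),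
      (∀ i, ‖u i‖ = 1) ∧ ∀ i j, G.Adj i j →
        (inner ℝ (u i) (u j) : ℝ) ≤ -(1/(k-1))}.Nonempty := by
    refine ⟨(n : ℝ), by exact_mod_cast hn2, u₀, hu₀n, fun i j hij => ?_⟩
    exact le_of_eq (hu₀i i j hij.ne)
  refine le_csInf hSne ?_
  rintro k ⟨hk2, u, hun, huadj⟩
  obtain ⟨s, hs⟩ := G.exists_isNClique_cliqueNum
  rw [← hs.card_eq]
  exact clique_bound hk2 hun huadj hs.isClique
end
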